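/- Let G be a finite abelian group with exponent n, let n' | n, and let G' be the largest subgroup of G with exponent n' (the set of elements g with n'·g = 0). Suppose that for every divisor d of n that does not divide n', G contains at most M independent elements of order d (i.e., G contains no subgroup isomorphic to Z_d^{M+1}). Then |G'| ≥ c_2 |G| with c_2^{-1} = prod_{d | n} d^M. -/

import Mathlib

open Finset

private def zmodCastEq {a b : ℕ} (h : a = b) : ZMod a ≃+ ZMod b := by
  subst h; exact AddEquiv.refl _

/-- let `G` be a finite abelian group with exponent `n`, `n' | n`, and let
`G' = {g ∈ G : n'·g = 0}` be the largest subgroup of `G` of exponent `n'`. If for every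
divisor `d` of `n` not dividing `n'` the group `G` contains no subgroup isomorphic to
`Z_d^{M+1}`, then `|G'| ≥ c_2|G|` with `c_2⁻¹ = ∏_{d | n} d^M`. -/
theorem stmt17 (G : Type) [AddCommGroup G] [Finite G] (n n' M : ℕ)
    (hexp : AddMonoid.exponent G = n) (hdvd : n' ∣ n)
    (hM : ∀ d : ℕ, d ∣ n → ¬ d ∣ n' →
      ¬ ∃ H : AddSubgroup G, Nonempty (H ≃+ (Fin (M + 1) → ZMod d))) :
    Nat.card G ≤ (∏ d ∈ n.divisors, d ^ M) *
      Nat.card ((Submodule.torsionBy ℤ G (n' : ℤ)).toAddSubgroup) := by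
  classical
  obtain ⟨ι, hι, k, hk1, ⟨e0⟩⟩ := AddCommGroup.equiv_directSum_zmod_of_finite' G
  set e : G ≃+ ∀ i, ZMod (k i) := e0.trans (DirectSum.addEquivProd _) with he
  have hkpos : ∀ i, 0 < k i := fun i => lt_trans one_pos (hk1 i)
  haveI : ∀ i, NeZero (k i) := fun i => ⟨(hkpos i).ne'⟩
  have hn : 0 < n := by
    rw [← hexp]
    exact AddMonoid.ExponentExists.of_finite.exponent_pos
  have hn' : 0 < n' := Nat.pos_of_dvd_of_pos hdvd hn
  -- each k i divides n
  have hkn : ∀ i, k i ∣ n := by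
    intro i
    have h1 : addOrderOf (e.symm (Pi.single i (1 : ZMod (k i)))) = k i := by
      rw [AddEquiv.addOrderOf_eq]
      rw [show Pi.single i (1 : ZMod (k i))
            = AddMonoidHom.single (fun j => ZMod (k j)) i 1 from rfl]
      rw [addOrderOf_injective (AddMonoidHom.single (fun j => ZMod (k j)) i)
            (Pi.single_injective (M := fun j => ZMod (k j)) i) 1]
      exact ZMod.addOrderOf_one (k i)
    rw [← hexp, ← h1]
    exact AddMonoid.addOrder_dvd_exponent _
  set g : ι → ℕ := fun i => Nat.gcd (k i) n' with hgdef
  have hgpos : ∀ i, 0 < g i := fun i => Nat.gcd_pos_of_pos_left _ (hkpos i)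
  haveI : ∀ i, NeZero (g i) := fun i => ⟨(hgpos i).ne'⟩
  have hgk : ∀ i, g i ∣ k i := fun i => Nat.gcd_dvd_left _ _
  have hgn' : ∀ i, g i ∣ n' := fun i => Nat.gcd_dvd_right _ _
  have hkgpos : ∀ i, 0 < k i / g i :=
    fun i => Nat.div_pos (Nat.le_of_dvd (hkpos i) (hgk i)) (hgpos i)
  -- coordinate injections into the torsion
  set c : ∀ i, ZMod (g i) → ZMod (k i) :=
    fun i x => ((k i / g i * x.val : ℕ) : ZMod (k i)) with hcdef
  have htor : ∀ i x, n' • c i x = 0 := by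
    intro i x
    have h1 : g i * (k i / g i) = k i := Nat.mul_div_cancel' (hgk i)
    have h2 : g i * (n' / g i) = n' := Nat.mul_div_cancel' (hgn' i)
    have hmul : (n' * (k i / g i * x.val) : ℕ) = k i * (n' / g i * x.val) := by
      calc n' * (k i / g i * x.val) = g i * (n' / g i) * (k i / g i * x.val) := by rw [h2]
        _ = g i * (k i / g i) * (n' / g i * x.val) := by ring
        _ = k i * (n' / g i * x.val) := by rw [h1]
    simp only [hcdef, nsmul_eq_mul]
    rw [← Nat.cast_mul, hmul, Nat.cast_mul, ZMod.natCast_self, zero_mul]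
  have hcinj : ∀ i, Function.Injective (c i) := by
    intro i x y hxy
    have hx : k i / g i * x.val < k i := by
      calc k i / g i * x.val < k i / g i * g i :=
        Nat.mul_lt_mul_of_pos_left (ZMod.val_lt x) (hkgpos i)
      _ = k i := Nat.div_mul_cancel (hgk i)
    have hy : k i / g i * y.val < k i := by
      calc k i / g i * y.val < k i / g i * g i :=
        Nat.mul_lt_mul_of_pos_left (ZMod.val_lt y) (hkgpos i)
      _ = k i := Nat.div_mul_cancel (hgk i)
    have := congrArg ZMod.val hxy
    rw [hcdef] at this
    simp only [ZMod.val_cast_of_lt hx, ZMod.val_cast_of_lt hy] at this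
    have := Nat.eq_of_mul_eq_mul_left (hkgpos i) this
    exact ZMod.val_injective _ this
  -- cardinality of G
  have hcardG : Nat.card G = ∏ i, k i := by
    rw [Nat.card_congr e.toEquiv, Nat.card_pi]
    simp [Nat.card_zmod]
  -- the torsion subgroup
  set T := (Submodule.torsionBy ℤ G (n' : ℤ)).toAddSubgroup with hT
  have hmem : ∀ x : G, x ∈ T ↔ n' • x = 0 := by
    intro x
    rw [hT, Submodule.mem_toAddSubgroup, Submodule.mem_torsionBy_iff, natCast_zsmul]
  have hTcard : (∏ i, g i) ≤ Nat.card T := by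
    have hmem' : ∀ y : ∀ i, ZMod (g i), e.symm (fun i => c i (y i)) ∈ T := by
      intro y
      rw [hmem, ← map_nsmul]
      have h0 : n' • (fun i => c i (y i)) = (0 : ∀ i, ZMod (k i)) :=
        funext fun i => by simpa using htor i (y i)
      rw [h0, map_zero]
    have hinj : Function.Injective
        (fun y : ∀ i, ZMod (g i) => (⟨e.symm (fun i => c i (y i)), hmem' y⟩ : T)) := by
      intro y y' hyy'
      have h1 : e.symm (fun i => c i (y i)) = e.symm (fun i => c i (y' i)) :=
        congrArg Subtype.val hyy'
      have h2 := e.symm.injective h1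
      funext i
      exact hcinj i (congrFun h2 i)
    calc (∏ i, g i) = Nat.card (∀ i, ZMod (g i)) := by
          rw [Nat.card_pi]; simp [Nat.card_zmod]
      _ ≤ Nat.card T := Nat.card_le_card_of_injective _ hinj
  -- the counting bound from hM
  have hcount : ∀ d : ℕ, d ∣ n → ¬ d ∣ n' → (univ.filter fun i => k i = d).card ≤ M := by
    intro d h1 h2
    by_contra hlt
    push_neg at hlt
    obtain ⟨s, hs_sub, hscard⟩ := Finset.exists_subset_card_eq hlt
    set ρ : Fin (M + 1) → ι := fun j => ((Finset.equivFinOfCardEq hscard).symm j : ι)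
      with hρdef
    have hρinj : Function.Injective ρ :=
      fun a b hab => (Finset.equivFinOfCardEq hscard).symm.injective (Subtype.ext hab)
    have hρk : ∀ j, k (ρ j) = d := by
      intro j
      have := hs_sub ((Finset.equivFinOfCardEq hscard).symm j).2
      exact (Finset.mem_filter.mp this).2
    set F0 : (Fin (M + 1) → ZMod d) →+ (∀ i, ZMod (k i)) :=
      ∑ j : Fin (M + 1), (AddMonoidHom.single (fun i => ZMod (k i)) (ρ j)).comp
        ((zmodCastEq (hρk j).symm).toAddMonoidHom.comp
          (Pi.evalAddMonoidHom (fun _ : Fin (M + 1) => ZMod d) j)) with hF0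
    have hF0apply : ∀ (f : Fin (M + 1) → ZMod d) (j0 : Fin (M + 1)),
        F0 f (ρ j0) = zmodCastEq (hρk j0).symm (f j0) := by
      intro f j0
      rw [hF0, AddMonoidHom.finset_sum_apply, Finset.sum_apply]
      rw [Finset.sum_eq_single j0]
      · simp only [AddMonoidHom.coe_comp, Function.comp_apply, AddEquiv.toAddMonoidHom_eq_coe,
          AddMonoidHom.coe_coe, Pi.evalAddMonoidHom_apply, AddMonoidHom.single_apply,
          Pi.single_eq_same]
      · intro j _ hj
        simp only [AddMonoidHom.coe_comp, Function.comp_apply, AddEquiv.toAddMonoidHom_eq_coe,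
          AddMonoidHom.coe_coe, Pi.evalAddMonoidHom_apply, AddMonoidHom.single_apply]
        exact Pi.single_eq_of_ne (M := fun i => ZMod (k i)) (fun hc => hj (hρinj hc).symm)
          ((zmodCastEq (hρk j).symm) (f j))
      · intro h; exact absurd (Finset.mem_univ j0) h
    have hF0inj : Function.Injective F0 := by
      intro f f' hff'
      funext j0
      have := congrFun hff' (ρ j0)
      rw [hF0apply, hF0apply] at this
      exact (zmodCastEq (hρk j0).symm).injective this
    have hFinj : Function.Injective (e.symm.toAddMonoidHom.comp F0) :=
      fun a b hab => hF0inj (e.symm.injective hab)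
    exact hM d h1 h2 ⟨(e.symm.toAddMonoidHom.comp F0).range,
      ⟨(AddMonoidHom.ofInjective hFinj).symm⟩⟩
  -- main arithmetic
  have hprod : (∏ i, (k i / g i)) ≤ ∏ d ∈ n.divisors, d ^ M := by
    have step1 : (∏ i, (k i / g i)) ≤ ∏ i, (if ¬ k i ∣ n' then k i else 1) := by
      apply Finset.prod_le_prod'
      intro i _
      by_cases h : k i ∣ n'
      · rw [if_neg (not_not_intro h)]
        have hgi : g i = k i := Nat.gcd_eq_left h
        rw [hgi, Nat.div_self (hkpos i)]
      · rw [if_pos h]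
        exact Nat.div_le_self _ _
    have step2 : (∏ i, (if ¬ k i ∣ n' then k i else 1))
        = ∏ i ∈ univ.filter (fun i => ¬ k i ∣ n'), k i := (Finset.prod_filter _ _).symm
    have hmaps : ∀ i ∈ univ.filter (fun i => ¬ k i ∣ n'), k i ∈ n.divisors :=
      fun i _ => Nat.mem_divisors.mpr ⟨hkn i, hn.ne'⟩
    have step3 : (∏ i ∈ univ.filter (fun i => ¬ k i ∣ n'), k i)
        = ∏ d ∈ n.divisors,
            ∏ i ∈ (univ.filter (fun i => ¬ k i ∣ n')).filter (fun i => k i = d), k i :=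
      (Finset.prod_fiberwise_of_maps_to hmaps _).symm
    have step4 : ∀ d ∈ n.divisors,
        (∏ i ∈ (univ.filter (fun i => ¬ k i ∣ n')).filter (fun i => k i = d), k i)
          ≤ d ^ M := by
      intro d hd
      have hdpos : 0 < d := Nat.pos_of_mem_divisors hd
      rw [Finset.prod_eq_pow_card (fun i hi => (Finset.mem_filter.mp hi).2)]
      apply Nat.pow_le_pow_right hdpos
      by_cases h : d ∣ n'
      · have : (univ.filter (fun i => ¬ k i ∣ n')).filter (fun i => k i = d) = ∅ := by
          apply Finset.filter_eq_empty_iff.mpr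
          intro i hi hkd
          exact (Finset.mem_filter.mp hi).2 (hkd ▸ h)
        rw [this]
        simp
      · calc ((univ.filter (fun i => ¬ k i ∣ n')).filter (fun i => k i = d)).card
            ≤ (univ.filter (fun i => k i = d)).card :=
              Finset.card_le_card
                (Finset.filter_subset_filter _ (Finset.subset_univ _))
          _ ≤ M := hcount d (Nat.mem_divisors.mp hd).1 h
    calc (∏ i, (k i / g i)) ≤ ∏ i, (if ¬ k i ∣ n' then k i else 1) := step1
      _ = _ := step2
      _ = _ := step3
      _ ≤ ∏ d ∈ n.divisors, d ^ M := Finset.prod_le_prod' step4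
  have hsplit : (∏ i, k i) = (∏ i, (k i / g i)) * ∏ i, g i := by
    rw [← Finset.prod_mul_distrib]
    exact Finset.prod_congr rfl fun i _ => (Nat.div_mul_cancel (hgk i)).symm
  rw [hcardG, hsplit]
  exact Nat.mul_le_mul hprod hTcard
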